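/- If q ≡ 1 (mod 4), then the generalized Gauss periods of order 2 modulo N = pq satisfy η₀^{(N)} · η₁^{(N)} = −(q−1)/4. -/

import Mathlib

open Finset

/-- `ξ_N = exp(2πi/N)`, a primitive `N`-th root of unity. -/
noncomputable def DHxi (N : ℕ) : ℂ := Complex.exp (2 * Real.pi * Complex.I / N)

/-- Gauss period: `Σ_{a ∈ D} ξ_N^a`. -/
noncomputable def DHeta (N : ℕ) (D : Finset (ZMod N)) : ℂ := ∑ a ∈ D, DHxi N ^ a.val

/-- Ding–Helleseth generalized cyclotomic class
`D₀ = {g^(2t) x^i : 0 ≤ t ≤ e/2 - 1, i ∈ {0,1}}` in `ZMod (p*q)`, where `e = (p-1)(q-1)/2`. -/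
def DHD0 (p q g x : ℕ) : Finset (ZMod (p * q)) :=
  (Finset.range ((p - 1) * (q - 1) / 4) ×ˢ Finset.range 2).image
    (fun ti => (g : ZMod (p * q)) ^ (2 * ti.1) * (x : ZMod (p * q)) ^ ti.2)

/-- `D₁ = g · D₀`. -/
def DHD1 (p q g x : ℕ) : Finset (ZMod (p * q)) :=
  (DHD0 p q g x).image (fun d => (g : ZMod (p * q)) * d)

/-- `P = {p, 2p, …, (q-1)p}` as a subset of `ZMod (p*q)`. -/
def DHP (p q : ℕ) : Finset (ZMod (p * q)) :=
  (Finset.Icc 1 (q - 1)).image (fun k => ((k * p : ℕ) : ZMod (p * q)))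

/-- `Q = {q, 2q, …, (p-1)q}` as a subset of `ZMod (p*q)`. -/
def DHQ (p q : ℕ) : Finset (ZMod (p * q)) :=
  (Finset.Icc 1 (p - 1)).image (fun k => ((k * q : ℕ) : ZMod (p * q)))

/-- First Ding–Helleseth sequence: `s_i = 1` iff `i mod N ∈ D₁ ∪ P`. -/
def DHs1 (p q g x : ℕ) (i : ℕ) : ℕ :=
  if (i : ZMod (p * q)) ∈ DHD1 p q g x ∪ DHP p q then 1 else 0

/-- Second Ding–Helleseth sequence: `s_i = 1` iff `i mod N ∈ D₁ ∪ Q`. -/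
def DHs2 (p q g x : ℕ) (i : ℕ) : ℕ :=
  if (i : ZMod (p * q)) ∈ DHD1 p q g x ∪ DHQ p q then 1 else 0

/-- Circulant matrix of the first sequence: `a_{i,j} = s_{(i-j) mod N}`. -/
noncomputable def DHA1 (p q g x : ℕ) : Matrix (Fin (p * q)) (Fin (p * q)) ℂ :=
  fun i j => (DHs1 p q g x ((((i : ℕ) : ZMod (p * q)) - ((j : ℕ) : ZMod (p * q))).val) : ℂ)

/-- Circulant matrix of the second sequence: `a_{i,j} = s_{(i-j) mod N}`. -/
noncomputable def DHA2 (p q g x : ℕ) : Matrix (Fin (p * q)) (Fin (p * q)) ℂ :=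
  fun i j => (DHs2 p q g x ((((i : ℕ) : ZMod (p * q)) - ((j : ℕ) : ZMod (p * q))).val) : ℂ)

/-- `S(z) = Σ_{i=0}^{N-1} s_i z^i` for the first sequence. -/
noncomputable def DHSval1 (p q g x : ℕ) (z : ℂ) : ℂ :=
  ∑ i ∈ Finset.range (p * q), (DHs1 p q g x i : ℂ) * z ^ i

/-- `S(z) = Σ_{i=0}^{N-1} s_i z^i` for the second sequence. -/
noncomputable def DHSval2 (p q g x : ℕ) (z : ℂ) : ℂ :=
  ∑ i ∈ Finset.range (p * q), (DHs2 p q g x i : ℂ) * z ^ i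

/-- `S(2) = Σ_{i=0}^{N-1} s_i 2^i` for the first sequence, as a natural number. -/
def DHS2num1 (p q g x : ℕ) : ℕ := ∑ i ∈ Finset.range (p * q), DHs1 p q g x i * 2 ^ i

/-- `S(2) = Σ_{i=0}^{N-1} s_i 2^i` for the second sequence, as a natural number. -/
def DHS2num2 (p q g x : ℕ) : ℕ := ∑ i ∈ Finset.range (p * q), DHs2 p q g x i * 2 ^ i

/-- Nonzero quadratic residues modulo `q`. -/
def DHQR (q : ℕ) [NeZero q] : Finset (ZMod q) :=
  Finset.univ.filter (fun a => a ≠ 0 ∧ ∃ b : ZMod q, b * b = a)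

/-- Quadratic nonresidues modulo `q`. -/
def DHQNR (q : ℕ) [NeZero q] : Finset (ZMod q) :=
  Finset.univ.filter (fun a => a ≠ 0 ∧ ¬∃ b : ZMod q, b * b = a)


private lemma DH_sum_range_even_odd {M : Type*} [AddCommMonoid M] (n : ℕ) (h : ℕ → M) :
    ∑ s ∈ Finset.range (2 * n), h s
      = ∑ t ∈ Finset.range n, (h (2 * t) + h (2 * t + 1)) := by
  induction n with
  | zero => simp
  | succ n ih =>
    rw [Nat.mul_succ, show 2 * n + 2 = (2 * n + 1) + 1 from rfl, Finset.sum_range_succ,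
      Finset.sum_range_succ, ih, Finset.sum_range_succ, add_assoc]


private lemma DH_sum_product_even_odd {M : Type*} [AddCommMonoid M] (n m : ℕ) (h : ℕ → ℕ → M) :
    ∑ si ∈ Finset.range (2*n) ×ˢ Finset.range m, h si.1 si.2
      = (∑ ti ∈ Finset.range n ×ˢ Finset.range m, h (2*ti.1) ti.2)
        + (∑ ti ∈ Finset.range n ×ˢ Finset.range m, h (2*ti.1+1) ti.2) := by
  rw [Finset.sum_product, Finset.sum_product, Finset.sum_product,
    DH_sum_range_even_odd n (fun s => ∑ i ∈ Finset.range m, h s i), Finset.sum_add_distrib]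

private lemma DH_geom_sum_zero {z : ℂ} (h1 : z ≠ 1) {n : ℕ} (hn : z ^ n = 1) :
    ∑ k ∈ Finset.range n, z ^ k = 0 := by
  rw [geom_sum_eq h1, hn]
  simp

private lemma DH_sum_range_mul {M : Type*} [AddCommMonoid M] (a b : ℕ) (ha : 0 < a)
    (h : ℕ → M) :
    ∑ k ∈ Finset.range (a * b), h k
      = ∑ uv ∈ Finset.range a ×ˢ Finset.range b, h (uv.1 + a * uv.2) := by
  refine Finset.sum_nbij' (fun k => (k % a, k / a)) (fun uv => uv.1 + a * uv.2) ?_ ?_ ?_ ?_ ?_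
  · intro k hk
    rw [Finset.mem_range] at hk
    rw [Finset.mem_product, Finset.mem_range, Finset.mem_range]
    exact ⟨Nat.mod_lt _ ha, Nat.div_lt_of_lt_mul (by rwa [mul_comm] at hk ⊢)⟩
  · intro uv huv
    rw [Finset.mem_product, Finset.mem_range, Finset.mem_range] at huv
    rw [Finset.mem_range]
    calc uv.1 + a * uv.2 < a + a * uv.2 := by omega
    _ ≤ a + a * (b - 1) := by
        have : uv.2 ≤ b - 1 := by omega
        exact Nat.add_le_add_left (Nat.mul_le_mul_left a this) a
    _ ≤ a * b := by
        rcases b with _ | b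
        · omega
        · rw [Nat.succ_sub_one, Nat.mul_succ]; omega
  · intro k _
    simp [Nat.mod_add_div]
  · intro uv huv
    rw [Finset.mem_product, Finset.mem_range, Finset.mem_range] at huv
    have h1 : (uv.1 + a * uv.2) % a = uv.1 := by
      rw [Nat.add_mul_mod_self_left, Nat.mod_eq_of_lt huv.1]
    have h2 : (uv.1 + a * uv.2) / a = uv.2 := by
      rw [Nat.add_mul_div_left _ _ ha, Nat.div_eq_of_lt huv.1, zero_add]
    show ((uv.1 + a * uv.2) % a, (uv.1 + a * uv.2) / a) = uv
    rw [h1, h2]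
  · intro k _
    rw [Nat.mod_add_div]

private lemma DH_eq_of_modEq_lcm {m n s s' : ℕ} (h1 : s ≡ s' [MOD m]) (h2 : s ≡ s' [MOD n])
    (hs : s < Nat.lcm m n) (hs' : s' < Nat.lcm m n) : s = s' := by
  rcases le_total s s' with h | h
  · have d1 := (Nat.modEq_iff_dvd' h).mp h1
    have d2 := (Nat.modEq_iff_dvd' h).mp h2
    have hd := Nat.lcm_dvd d1 d2
    have := Nat.eq_zero_of_dvd_of_lt hd (by omega)
    omega
  · have d1 := (Nat.modEq_iff_dvd' h).mp h1.symm
    have d2 := (Nat.modEq_iff_dvd' h).mp h2.symm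
    have hd := Nat.lcm_dvd d1 d2
    have := Nat.eq_zero_of_dvd_of_lt hd (by omega)
    omega

private lemma DH_pow_modEq {F : Type*} [Field F] {a : F} (ha : a ≠ 0) {s t : ℕ}
    (h : a ^ s = a ^ t) : s ≡ t [MOD orderOf a] := by
  obtain ⟨u, rfl⟩ := isUnit_iff_ne_zero.mpr ha
  rw [← Units.val_pow_eq_pow_val, ← Units.val_pow_eq_pow_val] at h
  have h2 : u ^ s = u ^ t := Units.ext h
  rw [orderOf_units]
  exact pow_eq_pow_iff_modEq.mp h2

private lemma DH_zmod_sum_eq {n : ℕ} [NeZero n] (F : ZMod n → ℂ) :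
    ∑ a : ZMod n, F a = ∑ k ∈ Finset.range n, F (k : ZMod n) := by
  refine Finset.sum_nbij' (fun a => a.val) (fun k => (k : ZMod n)) ?_ ?_ ?_ ?_ ?_
  · intro a _; rw [Finset.mem_range]; exact ZMod.val_lt a
  · intro k _; exact Finset.mem_univ _
  · intro a _; exact ZMod.natCast_zmod_val a
  · intro k hk; rw [Finset.mem_range] at hk
    show ((k : ZMod n)).val = k
    rw [ZMod.val_natCast, Nat.mod_eq_of_lt hk]
  · intro a _; rw [ZMod.natCast_zmod_val a]

set_option maxHeartbeats 1600000 in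
theorem stmt6 (p q g x : ℕ) (hp : Nat.Prime p) (hq : Nat.Prime q)
    (hpo : Odd p) (hqo : Odd q) (hpq : p < q)
    (hgcd : Nat.gcd (p - 1) (q - 1) = 2)
    (hgp : orderOf (g : ZMod p) = p - 1) (hgq : orderOf (g : ZMod q) = q - 1)
    (hxp : (x : ZMod p) = (g : ZMod p)) (hxq : (x : ZMod q) = 1) (h1 : q % 4 = 1) :
    DHeta (p * q) (DHD0 p q g x) * DHeta (p * q) (DHD1 p q g x) =
      -(((q : ℂ) - 1) / 4) := by
  haveI fp : Fact (Nat.Prime p) := ⟨hp⟩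
  haveI fq : Fact (Nat.Prime q) := ⟨hq⟩
  have hp1 : 1 < p := hp.one_lt
  have hq1 : 1 < q := hq.one_lt
  have hq5 : 5 ≤ q := by omega
  have hN0 : p * q ≠ 0 := by positivity
  haveI : NeZero (p * q) := ⟨hN0⟩
  haveI : NeZero q := ⟨by omega⟩
  haveI : NeZero p := ⟨by omega⟩
  obtain ⟨c, hc⟩ : 4 ∣ q - 1 := by omega
  have hcpos : 1 ≤ c := by omega
  obtain ⟨a2, ha2⟩ : 2 ∣ p - 1 := by rcases hpo with ⟨k, hk⟩; omega
  set n4 := (p - 1) * (q - 1) / 4 with hn4def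
  have hn4 : (p - 1) * (q - 1) = 4 * n4 := by
    have h4 : (p - 1) * (q - 1) = 4 * ((p - 1) * c) := by rw [hc]; ring
    rw [hn4def, h4, Nat.mul_div_cancel_left _ (by norm_num)]
  have hn4pos : 0 < n4 := by
    have hpos : 0 < (p - 1) * (q - 1) := Nat.mul_pos (by omega) (by omega)
    omega
  have hlcm : Nat.lcm (p - 1) (q - 1) = 2 * n4 := by
    have h := Nat.gcd_mul_lcm (p - 1) (q - 1)
    rw [hgcd, hn4] at h
    omega
  -- nonvanishing
  have hgp0 : (g : ZMod p) ≠ 0 := by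
    intro h
    have h2 : (g : ZMod p) ^ (p - 1) = 1 := by rw [← hgp]; exact pow_orderOf_eq_one _
    rw [h, zero_pow (by omega : p - 1 ≠ 0)] at h2
    exact zero_ne_one h2
  have hgq0 : (g : ZMod q) ≠ 0 := by
    intro h
    have h2 : (g : ZMod q) ^ (q - 1) = 1 := by rw [← hgq]; exact pow_orderOf_eq_one _
    rw [h, zero_pow (by omega : q - 1 ≠ 0)] at h2
    exact zero_ne_one h2
  have hdp : p ∣ p * q := dvd_mul_right p q
  have hdq : q ∣ p * q := dvd_mul_left q p
  -- projections
  have projp : ∀ s i : ℕ, (ZMod.castHom hdp (ZMod p))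
      ((g : ZMod (p*q))^s * (x : ZMod (p*q))^i) = (g : ZMod p)^(s+i) := by
    intro s i
    rw [map_mul, map_pow, map_pow, map_natCast, map_natCast, hxp, pow_add]
  have projq : ∀ s i : ℕ, (ZMod.castHom hdq (ZMod q))
      ((g : ZMod (p*q))^s * (x : ZMod (p*q))^i) = (g : ZMod q)^s := by
    intro s i
    rw [map_mul, map_pow, map_pow, map_natCast, map_natCast, hxq, one_pow, mul_one]
  -- injectivity of the parametrization
  have hinj : ∀ si ∈ Finset.range (2*n4) ×ˢ Finset.range 2,
      ∀ sj ∈ Finset.range (2*n4) ×ˢ Finset.range 2,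
      (fun si : ℕ × ℕ => (g : ZMod (p*q))^si.1 * (x : ZMod (p*q))^si.2) si =
      (fun si : ℕ × ℕ => (g : ZMod (p*q))^si.1 * (x : ZMod (p*q))^si.2) sj → si = sj := by
    rintro ⟨s, i⟩ hsi ⟨s', i'⟩ hsj heq
    simp only [Finset.mem_product, Finset.mem_range] at hsi hsj
    simp only at heq
    have hpe : (g : ZMod p)^(s+i) = (g : ZMod p)^(s'+i') := by
      rw [← projp s i, ← projp s' i', heq]
    have hqe : (g : ZMod q)^s = (g : ZMod q)^s' := by
      rw [← projq s i, ← projq s' i', heq]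
    have m1 : s + i ≡ s' + i' [MOD p - 1] := by rw [← hgp]; exact DH_pow_modEq hgp0 hpe
    have m2 : s ≡ s' [MOD q - 1] := by rw [← hgq]; exact DH_pow_modEq hgq0 hqe
    have m2' : s ≡ s' [MOD 2] := Nat.ModEq.of_dvd (⟨2*c, by omega⟩ : (2:ℕ) ∣ q - 1) m2
    have m1' : s + i ≡ s' + i' [MOD 2] := Nat.ModEq.of_dvd (⟨a2, by omega⟩ : (2:ℕ) ∣ p - 1) m1
    have mii : i ≡ i' [MOD 2] := m2'.add_left_cancel m1'
    have hii : i = i' := by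
      have h := mii
      unfold Nat.ModEq at h
      rw [Nat.mod_eq_of_lt hsi.2, Nat.mod_eq_of_lt hsj.2] at h
      exact h
    subst hii
    have m1'' : s ≡ s' [MOD p - 1] := Nat.ModEq.add_right_cancel' i m1
    have hss : s = s' := by
      refine DH_eq_of_modEq_lcm m1'' m2 ?_ ?_ <;> rw [hlcm] <;> omega
    simp [hss]
  -- the coprime residues
  have hcop : Nat.Coprime p q := (Nat.coprime_primes hp hq).mpr (Nat.ne_of_lt hpq)
  set K : Finset ℕ := (Finset.range (p*q)).filter (fun k => ¬ p ∣ k ∧ ¬ q ∣ k) with hKdef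
  have hKcard : K.card = 4 * n4 := by
    have hKeq : K = (Finset.range (p*q)).filter (fun k => Nat.Coprime (p*q) k) := by
      rw [hKdef]
      apply Finset.filter_congr
      intro k _
      rw [Nat.coprime_mul_iff_left, hp.coprime_iff_not_dvd, hq.coprime_iff_not_dvd]
    rw [hKeq, ← Nat.totient_eq_card_coprime, Nat.totient_mul hcop, Nat.totient_prime hp,
      Nat.totient_prime hq, hn4]
  have hKinj : ∀ k ∈ K, ∀ k' ∈ K,
      ((k : ZMod (p*q)) = (k' : ZMod (p*q))) → k = k' := by
    intro k hk k' hk' h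
    rw [hKdef, Finset.mem_filter, Finset.mem_range] at hk hk'
    have h2 := congrArg ZMod.val h
    rwa [ZMod.val_natCast, ZMod.val_natCast, Nat.mod_eq_of_lt hk.1,
      Nat.mod_eq_of_lt hk'.1] at h2
  have himeq : (Finset.range (2*n4) ×ˢ Finset.range 2).image
        (fun si : ℕ × ℕ => (g : ZMod (p*q))^si.1 * (x : ZMod (p*q))^si.2)
      = K.image (Nat.cast : ℕ → ZMod (p*q)) := by
    apply Finset.eq_of_subset_of_card_le
    · intro a ha
      rw [Finset.mem_image] at ha ⊢
      obtain ⟨⟨s, i⟩, _, rfl⟩ := ha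
      simp only
      refine ⟨((g : ZMod (p*q))^s * (x : ZMod (p*q))^i).val, ?_, ZMod.natCast_zmod_val _⟩
      rw [hKdef, Finset.mem_filter, Finset.mem_range]
      refine ⟨ZMod.val_lt _, ?_, ?_⟩
      · intro hdvd
        have h0 : (ZMod.castHom hdp (ZMod p)) ((g : ZMod (p*q))^s * (x : ZMod (p*q))^i) = 0 := by
          conv_lhs => rw [← ZMod.natCast_zmod_val ((g : ZMod (p*q))^s * (x : ZMod (p*q))^i)]
          rw [map_natCast]
          exact (ZMod.natCast_eq_zero_iff _ _).mpr hdvd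
        rw [projp s i] at h0
        exact pow_ne_zero _ hgp0 h0
      · intro hdvd
        have h0 : (ZMod.castHom hdq (ZMod q)) ((g : ZMod (p*q))^s * (x : ZMod (p*q))^i) = 0 := by
          conv_lhs => rw [← ZMod.natCast_zmod_val ((g : ZMod (p*q))^s * (x : ZMod (p*q))^i)]
          rw [map_natCast]
          exact (ZMod.natCast_eq_zero_iff _ _).mpr hdvd
        rw [projq s i] at h0
        exact pow_ne_zero _ hgq0 h0
    · rw [Finset.card_image_of_injOn (fun a ha b hb h =>
          hinj a (Finset.mem_coe.mp ha) b (Finset.mem_coe.mp hb) h),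
        Finset.card_image_of_injOn (fun a ha b hb h =>
          hKinj a (Finset.mem_coe.mp ha) b (Finset.mem_coe.mp hb) h),
        hKcard, Finset.card_product, Finset.card_range, Finset.card_range]
      omega
  have key : ∀ F : ZMod (p*q) → ℂ,
      ∑ si ∈ Finset.range (2*n4) ×ˢ Finset.range 2,
        F ((g : ZMod (p*q))^si.1 * (x : ZMod (p*q))^si.2)
      = ∑ k ∈ K, F ((k : ZMod (p*q))) := by
    intro F
    rw [← Finset.sum_image hinj, himeq, Finset.sum_image hKinj]
  -- roots of unity
  have hξ : IsPrimitiveRoot (DHxi (p*q)) (p*q) := Complex.isPrimitiveRoot_exp _ hN0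
  set ξ := DHxi (p*q) with hξdef
  have hξN : ξ ^ (p*q) = 1 := hξ.pow_eq_one
  have hNbig : 1 < p * q := by
    have h2 : 2 * 2 ≤ p * q := Nat.mul_le_mul hp1 hq1
    omega
  have hξ1 : ξ ≠ 1 := hξ.ne_one hNbig
  have hζq : IsPrimitiveRoot (ξ ^ p) q := hξ.pow (Nat.pos_of_ne_zero hN0) rfl
  have hζp : IsPrimitiveRoot (ξ ^ q) p := hξ.pow (Nat.pos_of_ne_zero hN0) (mul_comm p q)
  have hζq1 : ξ ^ p ≠ 1 := hζq.ne_one hq1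
  have hζp1 : ξ ^ q ≠ 1 := hζp.ne_one hp1
  have hζqq : (ξ ^ p) ^ q = 1 := by rw [← pow_mul, hξN]
  have hζpp : (ξ ^ q) ^ p = 1 := by rw [← pow_mul, mul_comm q p, hξN]
  have hfk : ∀ k : ℕ, ξ ^ ((k : ZMod (p*q))).val = ξ ^ k := by
    intro k
    rw [ZMod.val_natCast]
    conv_rhs => rw [← Nat.div_add_mod k (p*q)]
    rw [pow_add, pow_mul, hξN, one_pow, one_mul]
  -- the quadratic character mod q
  set χ : MulChar (ZMod q) ℂ := (quadraticChar (ZMod q)).ringHomComp (Int.castRingHom ℂ)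
    with hχdef
  have hq2 : ringChar (ZMod q) ≠ 2 := by rw [ZMod.ringChar_zmod_n]; omega
  have hχne : χ ≠ 1 := by
    rw [hχdef]
    exact (MulChar.ringHomComp_ne_one_iff (RingHom.injective_int _)).mpr
      (quadraticChar_ne_one hq2)
  have hχquad : χ.IsQuadratic := (quadraticChar_isQuadratic (ZMod q)).comp _
  set ψ : AddChar (ZMod q) ℂ := AddChar.zmodChar q hζqq with hψdef
  have hψ1 : ∀ u : ℕ, ψ ((u : ZMod q)) = (ξ^p)^u := fun u => AddChar.zmodChar_apply' hζqq u
  have hψprim : ψ.IsPrimitive := by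
    apply AddChar.IsPrimitive.of_ne_one
    rw [AddChar.zmod_char_ne_one_iff]
    have hone : ψ (1 : ZMod q) = ξ ^ p := by
      have h1q : ((1 : ℕ) : ZMod q) = 1 := Nat.cast_one
      rw [← h1q, hψ1 1, pow_one]
    rw [hone]
    exact hζq1
  have hGsq : (gaussSum χ ψ) ^ 2 = (q : ℂ) := by
    rw [gaussSum_sq hχne hχquad hψprim]
    have hm1 : χ (-1) = 1 := by
      rw [hχdef, MulChar.ringHomComp_apply, quadraticChar_neg_one hq2, ZMod.card,
        ZMod.χ₄_nat_one_mod_four h1]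
      norm_num
    rw [hm1, ZMod.card, one_mul]
  have hχg : χ ((g : ZMod q)) = -1 := by
    have hns : ¬ IsSquare ((g : ZMod q)) := by
      rintro ⟨b, hb⟩
      have hb0 : b ≠ 0 := by
        rintro rfl
        rw [mul_zero] at hb
        exact hgq0 hb
      have hpow : (g : ZMod q) ^ ((q-1)/2) = 1 := by
        rw [hb, ← sq, ← pow_mul, show 2 * ((q-1)/2) = q - 1 by omega]
        exact ZMod.pow_card_sub_one_eq_one hb0
      have hdvd := orderOf_dvd_of_pow_eq_one hpow
      rw [hgq] at hdvd
      have hle := Nat.le_of_dvd (by omega) hdvd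
      omega
    rw [hχdef, MulChar.ringHomComp_apply, quadraticChar_neg_one_iff_not_isSquare.mpr hns]
    norm_num
  have hp0q : ((p : ZMod q)) ≠ 0 := by
    rw [Ne, ZMod.natCast_eq_zero_iff]
    intro hdvd
    have := Nat.le_of_dvd (by omega) hdvd
    omega
  have hχp2 : χ ((p : ZMod q)) ^ 2 = 1 := by
    rcases hχquad (p : ZMod q) with h | h | h
    · exfalso
      rw [hχdef, MulChar.ringHomComp_apply] at h
      exact hp0q (quadraticChar_eq_zero_iff.mp
        ((map_eq_zero_iff (Int.castRingHom ℂ) (RingHom.injective_int _)).mp h))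
    · rw [h]; norm_num
    · rw [h]; norm_num
  have hχ0 : χ (0 : ZMod q) = 0 := by
    rw [hχdef, MulChar.ringHomComp_apply, quadraticChar_zero]
    norm_num
  -- eta as parametrized sums
  have hinjD0 : ∀ ti ∈ Finset.range n4 ×ˢ Finset.range 2,
      ∀ tj ∈ Finset.range n4 ×ˢ Finset.range 2,
      (fun ti : ℕ × ℕ => (g : ZMod (p*q)) ^ (2 * ti.1) * (x : ZMod (p*q)) ^ ti.2) ti =
      (fun ti : ℕ × ℕ => (g : ZMod (p*q)) ^ (2 * ti.1) * (x : ZMod (p*q)) ^ ti.2) tj →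
      ti = tj := by
    rintro ⟨t, i⟩ hti ⟨t', i'⟩ htj heq
    simp only [Finset.mem_product, Finset.mem_range] at hti htj
    have h2 := hinj (2*t, i) (by
        simp only [Finset.mem_product, Finset.mem_range]
        exact ⟨by omega, hti.2⟩) (2*t', i') (by
        simp only [Finset.mem_product, Finset.mem_range]
        exact ⟨by omega, htj.2⟩) heq
    simp only [Prod.mk.injEq] at h2 ⊢
    exact ⟨by omega, h2.2⟩
  have hη0 : DHeta (p*q) (DHD0 p q g x)
      = ∑ ti ∈ Finset.range n4 ×ˢ Finset.range 2,
          ξ ^ (((g : ZMod (p*q))^(2*ti.1) * (x : ZMod (p*q))^ti.2).val) := by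
    simp only [DHeta, DHD0, ← hξdef, ← hn4def]
    rw [Finset.sum_image hinjD0]
  have hgNunit : IsUnit ((g : ZMod (p*q))) := by
    rw [ZMod.isUnit_iff_coprime]
    refine Nat.Coprime.mul_right ?_ ?_
    · exact ((hp.coprime_iff_not_dvd).mpr (fun hdvd => hgp0
        ((ZMod.natCast_eq_zero_iff g p).mpr hdvd))).symm
    · exact ((hq.coprime_iff_not_dvd).mpr (fun hdvd => hgq0
        ((ZMod.natCast_eq_zero_iff g q).mpr hdvd))).symm
  have hη1 : DHeta (p*q) (DHD1 p q g x)
      = ∑ ti ∈ Finset.range n4 ×ˢ Finset.range 2,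
          ξ ^ (((g : ZMod (p*q))^(2*ti.1+1) * (x : ZMod (p*q))^ti.2).val) := by
    simp only [DHeta, DHD1, DHD0, ← hξdef, ← hn4def]
    rw [Finset.sum_image (fun a _ b _ h => hgNunit.mul_right_injective h),
      Finset.sum_image hinjD0]
    refine Finset.sum_congr rfl ?_
    rintro ⟨t, i⟩ _
    have hmul : (g : ZMod (p*q)) * ((g : ZMod (p*q))^(2*t) * (x : ZMod (p*q))^i)
        = (g : ZMod (p*q))^(2*t+1) * (x : ZMod (p*q))^i := by ring
    rw [hmul]
  -- inclusion-exclusion splitting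
  have hAinj : ∀ u ∈ Finset.range q, ∀ v ∈ Finset.range q, p * u = p * v → u = v :=
    fun u _ v _ h => Nat.eq_of_mul_eq_mul_left (by omega) h
  have hBinj : ∀ u ∈ Finset.range p, ∀ v ∈ Finset.range p, q * u = q * v → u = v :=
    fun u _ v _ h => Nat.eq_of_mul_eq_mul_left (by omega) h
  have split : ∀ G : ℕ → ℂ, ∑ k ∈ K, G k
      = (∑ k ∈ Finset.range (p*q), G k) - (∑ u ∈ Finset.range q, G (p*u))
        - (∑ u ∈ Finset.range p, G (q*u)) + G 0 := by
    intro G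
    have h1' := Finset.sum_filter_add_sum_filter_not (Finset.range (p*q))
      (fun k => ¬ p ∣ k ∧ ¬ q ∣ k) G
    have hnot : (Finset.range (p*q)).filter (fun k => ¬(¬ p ∣ k ∧ ¬ q ∣ k))
        = ((Finset.range (p*q)).filter (fun k => p ∣ k))
          ∪ ((Finset.range (p*q)).filter (fun k => q ∣ k)) := by
      rw [← Finset.filter_or]
      apply Finset.filter_congr
      intro k _
      constructor
      · intro h; by_contra hcon; push_neg at hcon; exact h ⟨hcon.1, hcon.2⟩
      · rintro (h | h) hk
        · exact hk.1 h
        · exact hk.2 h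
    have hunion : (∑ k ∈ ((Finset.range (p*q)).filter (fun k => p ∣ k))
          ∪ ((Finset.range (p*q)).filter (fun k => q ∣ k)), G k)
        + (∑ k ∈ ((Finset.range (p*q)).filter (fun k => p ∣ k))
          ∩ ((Finset.range (p*q)).filter (fun k => q ∣ k)), G k)
        = (∑ k ∈ (Finset.range (p*q)).filter (fun k => p ∣ k), G k)
          + (∑ k ∈ (Finset.range (p*q)).filter (fun k => q ∣ k), G k) :=
      Finset.sum_union_inter
    have hinter : ((Finset.range (p*q)).filter (fun k => p ∣ k))
        ∩ ((Finset.range (p*q)).filter (fun k => q ∣ k)) = {0} := by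
      ext k
      simp only [Finset.mem_inter, Finset.mem_filter, Finset.mem_range, Finset.mem_singleton]
      constructor
      · rintro ⟨⟨hk, hpk⟩, ⟨-, hqk⟩⟩
        exact Nat.eq_zero_of_dvd_of_lt (hcop.mul_dvd_of_dvd_of_dvd hpk hqk) hk
      · rintro rfl
        exact ⟨⟨by positivity, dvd_zero _⟩, ⟨by positivity, dvd_zero _⟩⟩
    have hA : (Finset.range (p*q)).filter (fun k => p ∣ k)
        = (Finset.range q).image (fun u => p * u) := by
      ext k
      simp only [Finset.mem_filter, Finset.mem_range, Finset.mem_image]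
      constructor
      · rintro ⟨hk, u, rfl⟩
        exact ⟨u, lt_of_mul_lt_mul_left hk (Nat.zero_le p), rfl⟩
      · rintro ⟨u, hu, rfl⟩
        exact ⟨mul_lt_mul_of_pos_left hu (by omega), ⟨u, rfl⟩⟩
    have hB : (Finset.range (p*q)).filter (fun k => q ∣ k)
        = (Finset.range p).image (fun u => q * u) := by
      ext k
      simp only [Finset.mem_filter, Finset.mem_range, Finset.mem_image]
      constructor
      · rintro ⟨hk, u, rfl⟩
        refine ⟨u, ?_, rfl⟩
        rw [mul_comm p q] at hk
        exact lt_of_mul_lt_mul_left hk (Nat.zero_le q)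
      · rintro ⟨u, hu, rfl⟩
        refine ⟨?_, ⟨u, rfl⟩⟩
        rw [mul_comm p q]
        exact mul_lt_mul_of_pos_left hu (by omega)
    have hSA : ∑ k ∈ (Finset.range (p*q)).filter (fun k => p ∣ k), G k
        = ∑ u ∈ Finset.range q, G (p*u) := by
      rw [hA, Finset.sum_image hAinj]
    have hSB : ∑ k ∈ (Finset.range (p*q)).filter (fun k => q ∣ k), G k
        = ∑ u ∈ Finset.range p, G (q*u) := by
      rw [hB, Finset.sum_image hBinj]
    rw [hnot] at h1'
    rw [hinter, Finset.sum_singleton] at hunion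
    rw [← hKdef] at h1'
    linear_combination h1' - hunion - hSA - hSB
  -- the two character sums
  have hsum1K : ∑ k ∈ K, ξ ^ k = 1 := by
    rw [split (fun k => ξ ^ k)]
    have hr : ∑ k ∈ Finset.range (p*q), ξ ^ k = 0 := DH_geom_sum_zero hξ1 hξN
    have ha : ∑ u ∈ Finset.range q, ξ ^ (p*u) = 0 := by
      have : ∀ u : ℕ, ξ ^ (p*u) = (ξ^p)^u := fun u => by rw [pow_mul]
      rw [Finset.sum_congr rfl (fun u _ => this u)]
      exact DH_geom_sum_zero hζq1 hζqq
    have hb : ∑ u ∈ Finset.range p, ξ ^ (q*u) = 0 := by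
      have : ∀ u : ℕ, ξ ^ (q*u) = (ξ^q)^u := fun u => by rw [pow_mul]
      rw [Finset.sum_congr rfl (fun u _ => this u)]
      exact DH_geom_sum_zero hζp1 hζpp
    rw [hr, ha, hb]
    norm_num
  have hsum2K : ∑ k ∈ K, χ ((k : ZMod q)) * ξ ^ k
      = -(χ ((p : ZMod q)) * gaussSum χ ψ) := by
    rw [split (fun k => χ ((k : ZMod q)) * ξ ^ k)]
    have hr : ∑ k ∈ Finset.range (p*q), χ ((k : ZMod q)) * ξ ^ k = 0 := by
      have heq := DH_sum_range_mul q p (by omega) (fun k => χ ((k : ZMod q)) * ξ ^ k)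
      rw [show q * p = p * q from mul_comm q p] at heq
      rw [heq, Finset.sum_product]
      apply Finset.sum_eq_zero
      intro u _
      have hterm : ∀ v ∈ Finset.range p,
          χ (((u + q * v : ℕ) : ZMod q)) * ξ ^ (u + q * v)
          = (χ ((u : ZMod q)) * ξ ^ u) * (ξ^q)^v := by
        intro v _
        have hcst : ((u + q * v : ℕ) : ZMod q) = (u : ZMod q) := by
          push_cast
          rw [ZMod.natCast_self]
          ring
        rw [hcst, pow_add, pow_mul]
        ring
      rw [Finset.sum_congr rfl hterm, ← Finset.mul_sum, DH_geom_sum_zero hζp1 hζpp, mul_zero]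
    have ha : ∑ u ∈ Finset.range q, χ (((p * u : ℕ) : ZMod q)) * ξ ^ (p * u)
        = χ ((p : ZMod q)) * gaussSum χ ψ := by
      rw [gaussSum, DH_zmod_sum_eq (fun a => χ a * ψ a), Finset.mul_sum]
      apply Finset.sum_congr rfl
      intro u _
      have hcst : ((p * u : ℕ) : ZMod q) = (p : ZMod q) * (u : ZMod q) := by push_cast; ring
      rw [hcst, map_mul, pow_mul, hψ1 u]
      ring
    have hb : ∑ u ∈ Finset.range p, χ (((q * u : ℕ) : ZMod q)) * ξ ^ (q * u) = 0 := by
      apply Finset.sum_eq_zero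
      intro u _
      have hcst : ((q * u : ℕ) : ZMod q) = 0 := by
        rw [ZMod.natCast_eq_zero_iff]
        exact dvd_mul_right q u
      rw [hcst, hχ0, zero_mul]
    have h0 : χ (((0:ℕ) : ZMod q)) * ξ ^ (0:ℕ) = 0 := by
      rw [Nat.cast_zero, hχ0, zero_mul]
    rw [hr, ha, hb, h0]
    ring
  -- relating eta sums to K sums
  set T0 := ∑ ti ∈ Finset.range n4 ×ˢ Finset.range 2,
      ξ ^ (((g : ZMod (p*q))^(2*ti.1) * (x : ZMod (p*q))^ti.2).val) with hT0def
  set T1 := ∑ ti ∈ Finset.range n4 ×ˢ Finset.range 2,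
      ξ ^ (((g : ZMod (p*q))^(2*ti.1+1) * (x : ZMod (p*q))^ti.2).val) with hT1def
  have hS1 : T0 + T1 = 1 := by
    have hsplit := DH_sum_product_even_odd n4 2
      (fun s i => ξ ^ (((g : ZMod (p*q))^s * (x : ZMod (p*q))^i).val))
    have hk := key (fun a => ξ ^ a.val)
    rw [hk] at hsplit
    rw [hT0def, hT1def, ← hsplit]
    rw [Finset.sum_congr rfl (fun k _ => hfk k)]
    exact hsum1K
  have hS2 : T0 - T1 = -(χ ((p : ZMod q)) * gaussSum χ ψ) := by
    have hsplit := DH_sum_product_even_odd n4 2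
      (fun s i => (-1:ℂ)^s * ξ ^ (((g : ZMod (p*q))^s * (x : ZMod (p*q))^i).val))
    have he : (∑ ti ∈ Finset.range n4 ×ˢ Finset.range 2,
        (-1:ℂ)^(2*ti.1) * ξ ^ (((g : ZMod (p*q))^(2*ti.1) * (x : ZMod (p*q))^ti.2).val)) = T0 := by
      rw [hT0def]
      refine Finset.sum_congr rfl ?_
      intro ti _
      rw [pow_mul]
      norm_num
    have ho : (∑ ti ∈ Finset.range n4 ×ˢ Finset.range 2,
        (-1:ℂ)^(2*ti.1+1) * ξ ^ (((g : ZMod (p*q))^(2*ti.1+1) * (x : ZMod (p*q))^ti.2).val)) = -T1 := by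
      rw [hT1def, ← Finset.sum_neg_distrib]
      refine Finset.sum_congr rfl ?_
      intro ti _
      rw [pow_succ, pow_mul]
      norm_num
    rw [he, ho] at hsplit
    have hk := key (fun a => χ ((ZMod.castHom hdq (ZMod q)) a) * ξ ^ a.val)
    have hkL : (∑ si ∈ Finset.range (2*n4) ×ˢ Finset.range 2,
        χ ((ZMod.castHom hdq (ZMod q)) ((g : ZMod (p*q))^si.1 * (x : ZMod (p*q))^si.2))
          * ξ ^ (((g : ZMod (p*q))^si.1 * (x : ZMod (p*q))^si.2).val))
        = ∑ si ∈ Finset.range (2*n4) ×ˢ Finset.range 2,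
          (-1:ℂ)^si.1 * ξ ^ (((g : ZMod (p*q))^si.1 * (x : ZMod (p*q))^si.2).val) := by
      refine Finset.sum_congr rfl ?_
      intro si _
      rw [projq si.1 si.2, map_pow, hχg]
    have hkR : (∑ k ∈ K, χ ((ZMod.castHom hdq (ZMod q)) ((k : ZMod (p*q))))
          * ξ ^ (((k : ZMod (p*q))).val))
        = ∑ k ∈ K, χ ((k : ZMod q)) * ξ ^ k := by
      refine Finset.sum_congr rfl ?_
      intro k _
      rw [map_natCast, hfk k]
    rw [hkL, hkR] at hk
    rw [hsplit] at hk
    rw [sub_eq_add_neg, hk]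
    exact hsum2K
  have hS2sq : (T0 - T1)^2 = (q : ℂ) := by
    rw [hS2, neg_sq, mul_pow, hGsq, hχp2, one_mul]
  rw [hη0, hη1]
  linear_combination ((T0 + T1 + 1)/4) * hS1 - (1/4) * hS2sq
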